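/- arXiv:1807.07727 — 5 statements merged into one kernel-verified Lean document; each statement's English description precedes it below -/
import Mathlib

section
/- Let N ≥ 1, let Ω ⊆ ℝ^N be a bounded open set, and let p, q, α, β be real numbers with 1 < q < p. Let f : ℝ^N → ℝ be integrable on Ω with f ≥ 0 almost everywhere on Ω. Let u : ℝ^N → ℝ be continuously differentiable with compact support contained in Ω, with u ≥ 0 everywhere and ∫_Ω u^q dx > 0. Assume that H_α(u) > 0 and that β < ∫_Ω ‖∇u‖^q dx / ∫_Ω u^q dx + K(p,q) · (H_α(u))^{(q−1)/(p−1)} · (∫_Ω f·u dx)^{(p−q)/(p−1)} / ∫_Ω u^q dx. Then H_α(u) + G_β(u) + ∫_Ω f·u dx > 0. (This is the pointwise core of Proposition 17 of the paper, where the hypothesis β < β_f(α) is replaced by the consequence β < Φ_α^+(u) actually used in its proof.) -/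
open MeasureTheory Real

lemma amgm_aux (θ x y : ℝ) (hθ0 : 0 < θ) (hθ1 : θ < 1) (hx : 0 ≤ x) (hy : 0 ≤ y) :
    1 / (1 - θ) * ((1 - θ) / θ) ^ θ * x ^ θ * y ^ (1 - θ) ≤ x + y := by
  have h1θ : 0 < 1 - θ := by linarith
  have key := Real.geom_mean_le_arith_mean2_weighted hθ0.le h1θ.le
    (div_nonneg hx hθ0.le) (div_nonneg hy h1θ.le) (by ring)
  rw [Real.div_rpow hx hθ0.le, Real.div_rpow hy h1θ.le] at key
  have hx' : θ * (x / θ) = x := by field_simp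
  have hy' : (1 - θ) * (y / (1 - θ)) = y := by field_simp
  rw [hx', hy'] at key
  refine le_trans (le_of_eq ?_) key
  rw [Real.div_rpow h1θ.le hθ0.le]
  have h2 : (1 - θ) ^ θ * (1 - θ) ^ (1 - θ) = 1 - θ := by
    rw [← Real.rpow_add h1θ]; simp
  have hθθ : (0:ℝ) < θ ^ θ := Real.rpow_pos_of_pos hθ0 θ
  have h1θθ : (0:ℝ) < (1 - θ) ^ (1 - θ) := Real.rpow_pos_of_pos h1θ _
  field_simp
  linear_combination x ^ θ * y ^ (1 - θ) * h2

/-- Pointwise core of Proposition 17: if `H_α(u) > 0` and `β < Φ_α^+(u)`, then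
`H_α(u) + G_β(u) + ∫_Ω f·u > 0`. -/
theorem stmt_0 (N : ℕ) (hN : 1 ≤ N)
    (Ω : Set (EuclideanSpace ℝ (Fin N))) (hΩ_open : IsOpen Ω)
    (hΩ_bdd : Bornology.IsBounded Ω)
    (p q α β : ℝ) (hq : 1 < q) (hpq : q < p)
    (f : EuclideanSpace ℝ (Fin N) → ℝ)
    (hf_int : IntegrableOn f Ω)
    (hf_nonneg : ∀ᵐ x ∂(volume.restrict Ω), 0 ≤ f x)
    (u : EuclideanSpace ℝ (Fin N) → ℝ)
    (hu_smooth : ContDiff ℝ 1 u)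
    (hu_supp : HasCompactSupport u)
    (hu_supp_sub : tsupport u ⊆ Ω)
    (hu_nonneg : ∀ x, 0 ≤ u x)
    (hu_q_pos : 0 < ∫ x in Ω, u x ^ q)
    (hH : 0 < (∫ x in Ω, ‖fderiv ℝ u x‖ ^ p) - α * ∫ x in Ω, |u x| ^ p)
    (hβ : β < (∫ x in Ω, ‖fderiv ℝ u x‖ ^ q) / (∫ x in Ω, u x ^ q)
      + ((p - 1) / (p - q)) * ((p - q) / (q - 1)) ^ ((q - 1) / (p - 1))
        * ((∫ x in Ω, ‖fderiv ℝ u x‖ ^ p) - α * ∫ x in Ω, |u x| ^ p) ^ ((q - 1) / (p - 1))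
        * (∫ x in Ω, f x * u x) ^ ((p - q) / (p - 1))
        / (∫ x in Ω, u x ^ q)) :
    0 < ((∫ x in Ω, ‖fderiv ℝ u x‖ ^ p) - α * ∫ x in Ω, |u x| ^ p)
      + ((∫ x in Ω, ‖fderiv ℝ u x‖ ^ q) - β * ∫ x in Ω, |u x| ^ q)
      + ∫ x in Ω, f x * u x := by
  have habs : (∫ x in Ω, |u x| ^ q) = ∫ x in Ω, u x ^ q :=
    integral_congr_ae (Filter.Eventually.of_forall fun x => by
      simp [abs_of_nonneg (hu_nonneg x)])
  rw [habs]
  set H : ℝ := (∫ x in Ω, ‖fderiv ℝ u x‖ ^ p) - α * ∫ x in Ω, |u x| ^ p with hHdef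
  set A : ℝ := ∫ x in Ω, ‖fderiv ℝ u x‖ ^ q with hAdef
  set Q : ℝ := ∫ x in Ω, u x ^ q with hQdef
  set F : ℝ := ∫ x in Ω, f x * u x with hFdef
  have hF : 0 ≤ F := by
    apply integral_nonneg_of_ae
    filter_upwards [hf_nonneg] with x hx
    exact mul_nonneg hx (hu_nonneg x)
  have hp1 : (0:ℝ) < p - 1 := by linarith
  have hq1 : (0:ℝ) < q - 1 := by linarith
  have hpq' : (0:ℝ) < p - q := by linarith
  set θ : ℝ := (q - 1) / (p - 1) with hθdef
  have hθ0 : 0 < θ := div_pos hq1 hp1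
  have hθ1 : θ < 1 := (div_lt_one hp1).2 (by linarith)
  have e1 : 1 - θ = (p - q) / (p - 1) := by
    rw [hθdef]; field_simp; ring
  have e2 : 1 / (1 - θ) = (p - 1) / (p - q) := by
    rw [e1, one_div_div]
  have e3 : (1 - θ) / θ = (p - q) / (q - 1) := by
    rw [e1, hθdef]; field_simp
  have key := amgm_aux θ H F hθ0 hθ1 hH.le hF
  rw [e2, e3] at key
  rw [e1] at key
  -- key : (p-1)/(p-q) * ((p-q)/(q-1))^θ * H^θ * F^((p-q)/(p-1)) ≤ H + F
  have hQne : Q ≠ 0 := ne_of_gt hu_q_pos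
  have hβQ : β * Q < A + (p - 1) / (p - q) * ((p - q) / (q - 1)) ^ θ * H ^ θ
      * F ^ ((p - q) / (p - 1)) := by
    have := (mul_lt_mul_of_pos_right hβ hu_q_pos)
    calc β * Q < ((A / Q) + (p - 1) / (p - q) * ((p - q) / (q - 1)) ^ θ * H ^ θ
          * F ^ ((p - q) / (p - 1)) / Q) * Q := this
      _ = A + (p - 1) / (p - q) * ((p - q) / (q - 1)) ^ θ * H ^ θ
          * F ^ ((p - q) / (p - 1)) := by field_simp
  linarith [key, hβQ]
end

section
/- Let N ≥ 1, let Ω ⊆ ℝ^N be a bounded open set, and let p, q, α, β be real numbers with 1 < q < p. Let f : ℝ^N → ℝ be integrable on Ω with f ≥ 0 almost everywhere on Ω. Let u : ℝ^N → ℝ be continuously differentiable with compact support contained in Ω, with u ≥ 0 everywhere and ∫_Ω u^q dx > 0. Assume that H_α(u) < 0 and that β > ∫_Ω ‖∇u‖^q dx / ∫_Ω u^q dx − K(p,q) · (−H_α(u))^{(q−1)/(p−1)} · (∫_Ω f·u dx)^{(p−q)/(p−1)} / ∫_Ω u^q dx. Then H_α(u) + G_β(u) − ∫_Ω f·u dx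 < 0. (This is the pointwise core of Proposition 18 of the paper, where the hypothesis β > β^f(α) is replaced by the consequence β > Φ_α^−(u) actually used in its proof.) -/
open MeasureTheory Real

/-- Pointwise core of Proposition 18: if `H_α(u) < 0` and `β > Φ_α^-(u)`, then
`H_α(u) + G_β(u) - ∫_Ω f·u < 0`. -/
theorem stmt_1 (N : ℕ) (hN : 1 ≤ N)
    (Ω : Set (EuclideanSpace ℝ (Fin N))) (hΩ_open : IsOpen Ω)
    (hΩ_bdd : Bornology.IsBounded Ω)
    (p q α β : ℝ) (hq : 1 < q) (hpq : q < p)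
    (f : EuclideanSpace ℝ (Fin N) → ℝ)
    (hf_int : IntegrableOn f Ω)
    (hf_nonneg : ∀ᵐ x ∂(volume.restrict Ω), 0 ≤ f x)
    (u : EuclideanSpace ℝ (Fin N) → ℝ)
    (hu_smooth : ContDiff ℝ 1 u)
    (hu_supp : HasCompactSupport u)
    (hu_supp_sub : tsupport u ⊆ Ω)
    (hu_nonneg : ∀ x, 0 ≤ u x)
    (hu_q_pos : 0 < ∫ x in Ω, u x ^ q)
    (hH : (∫ x in Ω, ‖fderiv ℝ u x‖ ^ p) - α * ∫ x in Ω, |u x| ^ p < 0)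
    (hβ : (∫ x in Ω, ‖fderiv ℝ u x‖ ^ q) / (∫ x in Ω, u x ^ q)
      - ((p - 1) / (p - q)) * ((p - q) / (q - 1)) ^ ((q - 1) / (p - 1))
        * (-((∫ x in Ω, ‖fderiv ℝ u x‖ ^ p) - α * ∫ x in Ω, |u x| ^ p)) ^ ((q - 1) / (p - 1))
        * (∫ x in Ω, f x * u x) ^ ((p - q) / (p - 1))
        / (∫ x in Ω, u x ^ q) < β) :
    ((∫ x in Ω, ‖fderiv ℝ u x‖ ^ p) - α * ∫ x in Ω, |u x| ^ p)
      + ((∫ x in Ω, ‖fderiv ℝ u x‖ ^ q) - β * ∫ x in Ω, |u x| ^ q)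
      - (∫ x in Ω, f x * u x) < 0 := by
  have habs : ∀ x : EuclideanSpace ℝ (Fin N), |u x| ^ q = u x ^ q := fun x => by
    rw [abs_of_nonneg (hu_nonneg x)]
  simp_rw [habs]
  set A := ∫ x in Ω, ‖fderiv ℝ u x‖ ^ q with hAdef
  set H := (∫ x in Ω, ‖fderiv ℝ u x‖ ^ p) - α * ∫ x in Ω, |u x| ^ p with hHdef
  set Q := ∫ x in Ω, u x ^ q with hQdef
  set F := ∫ x in Ω, f x * u x with hFdef
  have hq1 : (0:ℝ) < q - 1 := by linarith
  have hp1 : (0:ℝ) < p - 1 := by linarith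
  have hpq' : (0:ℝ) < p - q := by linarith
  set t := (q - 1) / (p - 1) with htdef
  set s := (p - q) / (p - 1) with hsdef
  have ht : 0 < t := div_pos hq1 hp1
  have hs : 0 < s := div_pos hpq' hp1
  have hts : t + s = 1 := by
    rw [htdef, hsdef, ← add_div, show q - 1 + (p - q) = p - 1 by ring,
      div_self hp1.ne']
  have hF0 : 0 ≤ F := integral_nonneg_of_ae <| by
    filter_upwards [hf_nonneg] with x hx
    exact mul_nonneg hx (hu_nonneg x)
  have ha : 0 < -H := by linarith
  -- rewrite K constant
  have hst : (p - q) / (q - 1) = s / t := by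
    rw [hsdef, htdef]
    field_simp
  have h1s : (p - 1) / (p - q) = 1 / s := by
    rw [hsdef]; field_simp
  -- key algebraic identity
  have hKab : (p - 1) / (p - q) * ((p - q) / (q - 1)) ^ t * (-H) ^ t * F ^ s
      = ((-H) / t) ^ t * (F / s) ^ s := by
    rw [hst, h1s, Real.div_rpow ha.le ht.le, Real.div_rpow hF0 hs.le,
      Real.div_rpow hs.le ht.le]
    have hss : s ^ t * s ^ s = s := by
      rw [← Real.rpow_add hs, hts, Real.rpow_one]
    have htt : (0:ℝ) < t ^ t := Real.rpow_pos_of_pos ht t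
    have hsss : (0:ℝ) < s ^ s := Real.rpow_pos_of_pos hs s
    clear_value s t
    field_simp
    linear_combination (F ^ s) * hss
  have amgm : ((-H) / t) ^ t * (F / s) ^ s ≤ t * ((-H) / t) + s * (F / s) :=
    Real.geom_mean_le_arith_mean2_weighted ht.le hs.le
      (div_nonneg ha.le ht.le) (div_nonneg hF0 hs.le) hts
  rw [mul_div_cancel₀ _ ht.ne', mul_div_cancel₀ _ hs.ne'] at amgm
  have key : (p - 1) / (p - q) * ((p - q) / (q - 1)) ^ t * (-H) ^ t * F ^ s ≤ -H + F := by
    rw [hKab]; exact amgm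
  -- from hβ
  have hβ' : A - (p - 1) / (p - q) * ((p - q) / (q - 1)) ^ t * (-H) ^ t * F ^ s < β * Q := by
    rw [div_sub_div_same] at hβ
    exact (div_lt_iff₀ hu_q_pos).mp hβ
  linarith
end

section
/- Let p, q, a, c, g be real numbers with 1 < q < p, a > 0 and c ≥ 0. If g > −K(p,q) · a^{(q−1)/(p−1)} · c^{(p−q)/(p−1)}, then for every real t > 0 one has a·t^p + g·t^q + c·t > 0; in particular (taking t = 1), a + g + c > 0. (This is the one-variable positivity criterion underlying the proof of Proposition 17 of the paper.) -/
open Real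

/-- One-variable positivity criterion underlying the proof of Proposition 17. -/
theorem stmt_2 (p q a c g : ℝ) (hq : 1 < q) (hpq : q < p) (ha : 0 < a) (hc : 0 ≤ c)
    (hg : -(((p - 1) / (p - q)) * ((p - q) / (q - 1)) ^ ((q - 1) / (p - 1))
      * a ^ ((q - 1) / (p - 1)) * c ^ ((p - q) / (p - 1))) < g) :
    (∀ t : ℝ, 0 < t → 0 < a * t ^ p + g * t ^ q + c * t) ∧ 0 < a + g + c := by
  have hp1 : (0:ℝ) < p - 1 := by linarith
  have hq1 : (0:ℝ) < q - 1 := by linarith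
  have hpq' : (0:ℝ) < p - q := by linarith
  set w₁ : ℝ := (q - 1) / (p - 1) with hw₁
  set w₂ : ℝ := (p - q) / (p - 1) with hw₂
  have hw₁pos : 0 < w₁ := div_pos hq1 hp1
  have hw₂pos : 0 < w₂ := div_pos hpq' hp1
  have hwsum : w₁ + w₂ = 1 := by rw [hw₁, hw₂]; field_simp; ring
  have hr1 : (p - 1) / (p - q) = 1 / w₂ := by rw [hw₂, one_div_div]
  have hr2 : (p - q) / (q - 1) = w₂ / w₁ := by
    rw [hw₁, hw₂]; rw [div_div_div_eq]; rw [mul_comm ((p-q)) ((p-1)), mul_div_mul_left _ _ hp1.ne']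
  have hK : ((p - 1) / (p - q)) * ((p - q) / (q - 1)) ^ w₁
      = (1 / w₁) ^ w₁ * (1 / w₂) ^ w₂ := by
    rw [hr1, hr2, Real.div_rpow hw₂pos.le hw₁pos.le, Real.div_rpow zero_le_one hw₁pos.le,
      Real.div_rpow zero_le_one hw₂pos.le, Real.one_rpow]
    have h2 : w₂ ^ w₁ / w₂ = 1 / w₂ ^ w₂ := by
      rw [div_eq_div_iff hw₂pos.ne' (by positivity), ← Real.rpow_add hw₂pos, hwsum,
        Real.rpow_one, one_mul]
    field_simp at h2 ⊢
    simp only [Real.one_rpow, mul_one] at h2 ⊢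
    nlinarith [h2, Real.rpow_pos_of_pos hw₁pos w₁, Real.rpow_pos_of_pos hw₂pos w₂]
  have key : ∀ t : ℝ, 0 < t →
      ((p - 1) / (p - q)) * ((p - q) / (q - 1)) ^ w₁ * a ^ w₁ * c ^ w₂ * t ^ q
        ≤ a * t ^ p + c * t := by
    intro t ht
    have h1 : (a * t ^ p / w₁) ^ w₁ * (c * t / w₂) ^ w₂
        ≤ w₁ * (a * t ^ p / w₁) + w₂ * (c * t / w₂) :=
      Real.geom_mean_le_arith_mean2_weighted hw₁pos.le hw₂pos.le (by positivity)
        (by positivity) hwsum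
    have hRHS : w₁ * (a * t ^ p / w₁) + w₂ * (c * t / w₂) = a * t ^ p + c * t := by
      field_simp
    have hLHS : (a * t ^ p / w₁) ^ w₁ * (c * t / w₂) ^ w₂
        = (1 / w₁) ^ w₁ * (1 / w₂) ^ w₂ * a ^ w₁ * c ^ w₂ * t ^ q := by
      rw [Real.div_rpow (by positivity) hw₁pos.le, Real.div_rpow (by positivity) hw₂pos.le,
        Real.mul_rpow ha.le (by positivity), Real.mul_rpow hc ht.le,
        ← Real.rpow_mul ht.le, Real.div_rpow zero_le_one hw₁pos.le,
        Real.div_rpow zero_le_one hw₂pos.le, Real.one_rpow, Real.one_rpow]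
      have hq' : p * w₁ + w₂ = q := by
        rw [hw₁, hw₂]; field_simp; ring
      calc a ^ w₁ * t ^ (p * w₁) / w₁ ^ w₁ * (c ^ w₂ * t ^ w₂ / w₂ ^ w₂)
          = 1 / w₁ ^ w₁ * (1 / w₂ ^ w₂) * a ^ w₁ * c ^ w₂ * (t ^ (p * w₁) * t ^ w₂) := by
            ring
        _ = 1 / w₁ ^ w₁ * (1 / w₂ ^ w₂) * a ^ w₁ * c ^ w₂ * t ^ q := by
            rw [← Real.rpow_add ht, hq']
    rw [hK]
    linarith [h1, hRHS ▸ hLHS ▸ h1]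
  have main : ∀ t : ℝ, 0 < t → 0 < a * t ^ p + g * t ^ q + c * t := by
    intro t ht
    have htq : 0 < t ^ q := Real.rpow_pos_of_pos ht q
    have h2 := key t ht
    nlinarith [mul_lt_mul_of_pos_right hg htq]
  refine ⟨main, ?_⟩
  have := main 1 one_pos
  simpa using this
end

section
/- Let p, q, a, c be real numbers with 1 < q < p, a > 0 and c > 0. Then for any real g the following are equivalent: (i) a·t^p + g·t^q + c·t > 0 for every real t > 0; (ii) g > −K(p,q) · a^{(q−1)/(p−1)} · c^{(p−q)/(p−1)}. (This is the sharp characterization of positivity of the auxiliary function Q_β established in the proof of Proposition 17 of the paper.) -/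
open Real

private lemma eq_of_log_eq' {x y : ℝ} (hx : 0 < x) (hy : 0 < y)
    (h : Real.log x = Real.log y) : x = y := by
  rw [← Real.exp_log hx, ← Real.exp_log hy, h]

/-- Sharp characterization of positivity of the auxiliary function `Q_β`
from the proof of Proposition 17. -/
theorem stmt_3 (p q a c : ℝ) (hq : 1 < q) (hpq : q < p) (ha : 0 < a) (hc : 0 < c) (g : ℝ) :
    (∀ t : ℝ, 0 < t → 0 < a * t ^ p + g * t ^ q + c * t) ↔
      -(((p - 1) / (p - q)) * ((p - q) / (q - 1)) ^ ((q - 1) / (p - 1))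
        * a ^ ((q - 1) / (p - 1)) * c ^ ((p - q) / (p - 1))) < g := by
  have hq1 : (0:ℝ) < q - 1 := by linarith
  have hpq' : (0:ℝ) < p - q := by linarith
  have hp1 : (0:ℝ) < p - 1 := by linarith
  set w₁ : ℝ := (q - 1) / (p - 1) with hw₁def
  set w₂ : ℝ := (p - q) / (p - 1) with hw₂def
  have hw₁ : 0 < w₁ := div_pos hq1 hp1
  have hw₂ : 0 < w₂ := div_pos hpq' hp1
  have hw : w₁ + w₂ = 1 := by
    rw [hw₁def, hw₂def, ← add_div]
    field_simp
    ring
  set M : ℝ := (a / w₁) ^ w₁ * (c / w₂) ^ w₂ with hMdef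
  have hM : 0 < M :=
    mul_pos (rpow_pos_of_pos (div_pos ha hw₁) _) (rpow_pos_of_pos (div_pos hc hw₂) _)
  -- log facts
  have hlog_M : Real.log M = w₁ * (Real.log a - Real.log w₁)
      + w₂ * (Real.log c - Real.log w₂) := by
    rw [hMdef, Real.log_mul (by positivity) (by positivity),
      Real.log_rpow (div_pos ha hw₁), Real.log_rpow (div_pos hc hw₂),
      Real.log_div ha.ne' hw₁.ne', Real.log_div hc.ne' hw₂.ne']
  have hlw₁ : Real.log w₁ = Real.log (q - 1) - Real.log (p - 1) :=
    Real.log_div hq1.ne' hp1.ne'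
  have hlw₂ : Real.log w₂ = Real.log (p - q) - Real.log (p - 1) :=
    Real.log_div hpq'.ne' hp1.ne'
  -- The constant in the statement equals M
  have hconst : ((p - 1) / (p - q)) * ((p - q) / (q - 1)) ^ w₁ * a ^ w₁ * c ^ w₂ = M := by
    apply eq_of_log_eq' (by positivity) hM
    rw [Real.log_mul (by positivity) (by positivity),
      Real.log_mul (by positivity) (by positivity),
      Real.log_mul (by positivity) (by positivity),
      Real.log_rpow (div_pos hpq' hq1), Real.log_rpow ha, Real.log_rpow hc,
      Real.log_div hp1.ne' hpq'.ne', Real.log_div hpq'.ne' hq1.ne',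
      hlog_M, hlw₁, hlw₂]
    have h2 : w₂ = 1 - w₁ := by linarith
    rw [h2]; ring
  rw [hconst]
  constructor
  · -- forward
    intro h
    set r : ℝ := c * w₁ / (a * w₂) with hrdef
    have hr : 0 < r := by positivity
    set t₀ : ℝ := r ^ ((1:ℝ) / (p - 1)) with ht₀def
    have ht₀ : 0 < t₀ := rpow_pos_of_pos hr _
    have hlt₀ : Real.log t₀ = (1 / (p - 1)) * Real.log r := Real.log_rpow hr _
    have hlr : Real.log r = Real.log c + Real.log w₁ - Real.log a - Real.log w₂ := by
      rw [hrdef, Real.log_div (by positivity) (by positivity),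
        Real.log_mul hc.ne' hw₁.ne', Real.log_mul ha.ne' hw₂.ne']
      ring
    have hA : a * t₀ ^ (p - q) = M * w₁ := by
      apply eq_of_log_eq' (by positivity) (by positivity)
      rw [Real.log_mul ha.ne' (by positivity), Real.log_rpow ht₀,
        Real.log_mul hM.ne' hw₁.ne', hlt₀, hlr, hlog_M, hlw₁, hlw₂, hw₁def, hw₂def]
      field_simp
      ring
    have hC : c * t₀ ^ (1 - q) = M * w₂ := by
      apply eq_of_log_eq' (by positivity) (by positivity)
      rw [Real.log_mul hc.ne' (by positivity), Real.log_rpow ht₀,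
        Real.log_mul hM.ne' hw₂.ne', hlt₀, hlr, hlog_M, hlw₁, hlw₂, hw₁def, hw₂def]
      field_simp
      ring
    have h0 := h t₀ ht₀
    have hsplit : a * t₀ ^ p + g * t₀ ^ q + c * t₀
        = t₀ ^ q * (a * t₀ ^ (p - q) + g + c * t₀ ^ (1 - q)) := by
      have e1 : t₀ ^ p = t₀ ^ q * t₀ ^ (p - q) := by
        rw [← Real.rpow_add ht₀]; ring_nf
      have e2 : t₀ = t₀ ^ q * t₀ ^ (1 - q) := by
        rw [← Real.rpow_add ht₀]; norm_num
      calc a * t₀ ^ p + g * t₀ ^ q + c * t₀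
          = a * (t₀ ^ q * t₀ ^ (p - q)) + g * t₀ ^ q + c * (t₀ ^ q * t₀ ^ (1 - q)) := by
            rw [← e1, ← e2]
        _ = t₀ ^ q * (a * t₀ ^ (p - q) + g + c * t₀ ^ (1 - q)) := by ring
    rw [hsplit] at h0
    have htq : 0 < t₀ ^ q := rpow_pos_of_pos ht₀ _
    have := (mul_pos_iff_of_pos_left htq).mp h0
    rw [hA, hC] at this
    have hMsum : M * w₁ + M * w₂ = M := by rw [← mul_add, hw, mul_one]
    linarith
  · -- backward
    intro hg t ht
    have htq : 0 < t ^ q := rpow_pos_of_pos ht _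
    have hkey : M ≤ a * t ^ (p - q) + c * t ^ (1 - q) := by
      have hx : 0 < a * t ^ (p - q) / w₁ := by positivity
      have hy : 0 < c * t ^ (1 - q) / w₂ := by positivity
      have amgm := Real.geom_mean_le_arith_mean2_weighted hw₁.le hw₂.le hx.le hy.le hw
      have hgm : (a * t ^ (p - q) / w₁) ^ w₁ * (c * t ^ (1 - q) / w₂) ^ w₂ = M := by
        apply eq_of_log_eq' (by positivity) hM
        rw [Real.log_mul (by positivity) (by positivity),
          Real.log_rpow hx, Real.log_rpow hy,
          Real.log_div (by positivity) hw₁.ne', Real.log_div (by positivity) hw₂.ne',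
          Real.log_mul ha.ne' (by positivity), Real.log_mul hc.ne' (by positivity),
          Real.log_rpow ht, Real.log_rpow ht, hlog_M, hw₁def, hw₂def]
        field_simp
        ring
      have harith : w₁ * (a * t ^ (p - q) / w₁) + w₂ * (c * t ^ (1 - q) / w₂)
          = a * t ^ (p - q) + c * t ^ (1 - q) := by
        field_simp
      rw [hgm, harith] at amgm
      exact amgm
    have hsplit : a * t ^ p + g * t ^ q + c * t
        = t ^ q * (a * t ^ (p - q) + g + c * t ^ (1 - q)) := by
      have e1 : t ^ p = t ^ q * t ^ (p - q) := by
        rw [← Real.rpow_add ht]; ring_nf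
      have e2 : t = t ^ q * t ^ (1 - q) := by
        rw [← Real.rpow_add ht]; norm_num
      calc a * t ^ p + g * t ^ q + c * t
          = a * (t ^ q * t ^ (p - q)) + g * t ^ q + c * (t ^ q * t ^ (1 - q)) := by
            rw [← e1, ← e2]
        _ = t ^ q * (a * t ^ (p - q) + g + c * t ^ (1 - q)) := by ring
    rw [hsplit]
    apply mul_pos htq
    linarith
end

section
/- Let p, q, a, c, g, t be real numbers with 1 < q < p, a > 0, c > 0 and t > 0. Suppose that a·t^p + g·t^q + c·t = 0 and p·a·t^p + q·g·t^q + c·t = 0. Then t = ((q−1)/(p−q))^{1/(p−1)} · (c/a)^{1/(p−1)} and g = −K(p,q) · a^{(q−1)/(p−1)} · c^{(p−q)/(p−1)}. (This is the double-root identification solved explicitly in the proof of Proposition 17 of the paper, equations (35)–(37).) -/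
open Real

/-- Double-root identification from the proof of Proposition 17, equations (35)–(37). -/
theorem stmt_4 (p q a c g t : ℝ) (hq : 1 < q) (hpq : q < p) (ha : 0 < a) (hc : 0 < c)
    (ht : 0 < t)
    (h1 : a * t ^ p + g * t ^ q + c * t = 0)
    (h2 : p * (a * t ^ p) + q * (g * t ^ q) + c * t = 0) :
    t = ((q - 1) / (p - q)) ^ (1 / (p - 1)) * (c / a) ^ (1 / (p - 1)) ∧
      g = -(((p - 1) / (p - q)) * ((p - q) / (q - 1)) ^ ((q - 1) / (p - 1))
        * a ^ ((q - 1) / (p - 1)) * c ^ ((p - q) / (p - 1))) := by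
  have hp1 : (0:ℝ) < p - 1 := by linarith
  have hq1 : (0:ℝ) < q - 1 := by linarith
  have hpq' : (0:ℝ) < p - q := by linarith
  have e1 : (p - q) * (a * t ^ p) = (q - 1) * (c * t) := by linear_combination h2 - q * h1
  have e2 : (p - q) * (g * t ^ q) = -((p - 1) * (c * t)) := by linear_combination p * h1 - h2
  set X : ℝ := (q - 1) / (p - q) * (c / a) with hXdef
  have hX : 0 < X := by positivity
  have hsplit : t ^ p = t ^ (p - 1) * t := by
    conv_lhs => rw [show p = p - 1 + 1 by ring]
    rw [Real.rpow_add ht, Real.rpow_one]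
  have hkey : t ^ (p - 1) * ((p - q) * a) * t = (q - 1) * c * t := by
    rw [hsplit] at e1
    linear_combination e1
  have hkey2 : t ^ (p - 1) * ((p - q) * a) = (q - 1) * c := mul_right_cancel₀ ht.ne' hkey
  have htp : t ^ (p - 1) = X := by
    rw [hXdef]
    field_simp
    linear_combination hkey2
  have ht_eq : t = X ^ (1 / (p - 1)) := by
    have h := Real.rpow_mul ht.le (p - 1) (1 / (p - 1))
    rw [mul_one_div, div_self hp1.ne', Real.rpow_one, htp] at h
    exact h
  constructor
  · rw [ht_eq, hXdef, Real.mul_rpow (by positivity) (by positivity)]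
  · have htq : (0:ℝ) < t ^ q := Real.rpow_pos_of_pos ht q
    have h1q : t ^ (1 - q) = t / t ^ q := by
      rw [Real.rpow_sub ht, Real.rpow_one]
    have hg : g = -((p - 1) / (p - q) * c * t ^ (1 - q)) := by
      rw [h1q]
      field_simp
      linear_combination e2
    have ht1q : t ^ (1 - q) = ((p - q) / (q - 1)) ^ ((q - 1) / (p - 1)) *
        (a / c) ^ ((q - 1) / (p - 1)) := by
      rw [ht_eq, ← Real.rpow_mul hX.le]
      have : 1 / (p - 1) * (1 - q) = -((q - 1) / (p - 1)) := by
        field_simp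
        ring
      rw [this, Real.rpow_neg hX.le, hXdef,
        Real.mul_rpow (by positivity) (by positivity), mul_inv,
        ← Real.inv_rpow (by positivity), ← Real.inv_rpow (by positivity),
        inv_div, inv_div]
    have hca : c * (a / c) ^ ((q - 1) / (p - 1)) =
        a ^ ((q - 1) / (p - 1)) * c ^ ((p - q) / (p - 1)) := by
      rw [Real.div_rpow ha.le hc.le]
      rw [show (p - q) / (p - 1) = 1 - (q - 1) / (p - 1) by field_simp; ring]
      rw [Real.rpow_sub hc, Real.rpow_one]
      field_simp
    rw [hg, ht1q]
    rw [show (p - 1) / (p - q) * c * (((p - q) / (q - 1)) ^ ((q - 1) / (p - 1)) *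
        (a / c) ^ ((q - 1) / (p - 1))) = (p - 1) / (p - q) *
        ((p - q) / (q - 1)) ^ ((q - 1) / (p - 1)) *
        (c * (a / c) ^ ((q - 1) / (p - 1))) by ring, hca]
    ring
end
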